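/- Let (X, ρ) be a Polish metric space, let p ≥ 1, and let μ, ν ∈ P(X)^d be d-tuples of Borel probability measures on X. Then the simultaneous p-th transport cost dominates the average of the classical ones: inf_{π ∈ Π(μ,ν)} ∫_{X×X} ρ(x,y)^p π(dx,dy) ≥ (1/d) ∑ⱼ W_p(μⱼ,νⱼ)^p, where W_p(μⱼ,νⱼ)^p := inf over all couplings γ of μⱼ and νⱼ of ∫ ρ(x,y)^p γ(dx,dy), and the infimum over an empty set is +∞. -/
import Mathlib


open MeasureTheory ProbabilityTheory ENNReal

noncomputable section

/-- Average probability measure of a `d`-tuple of probability measures. -/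
def avgProb {X : Type*} [MeasurableSpace X] {d : ℕ} (μ : Fin d → Measure X) : Measure X :=
  (d : ℝ≥0∞)⁻¹ • ∑ j, μ j

/-- The set `Π(μ,ν) = {μ̄ ⊗ κ : κ ∈ K(μ,ν)}` of simultaneous transport plans. -/
def PiSet {X : Type*} [MeasurableSpace X] {d : ℕ}
    (μ : Fin d → Measure X) (ν : Fin d → Measure X) : Set (Measure (X × X)) :=
  {π | ∃ κ : Kernel X X, IsMarkovKernel κ ∧
    (∀ j, ∀ B : Set X, MeasurableSet B → ν j B ≤ ∫⁻ x, κ x B ∂(μ j)) ∧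
    π = (avgProb μ).compProd κ}

/-- The `p`-th power Wasserstein cost between two probability measures, as an infimum
over couplings. -/
def wassersteinCostP {X : Type*} [MeasurableSpace X] [MetricSpace X]
    (α β : Measure X) (p : ℝ) : ℝ≥0∞ :=
  sInf {r | ∃ γ : Measure (X × X), γ.map Prod.fst = α ∧ γ.map Prod.snd = β ∧
    r = ∫⁻ q, ENNReal.ofReal (dist q.1 q.2 ^ p) ∂γ}

/-- the simultaneous `p`-th transport cost dominates the average of the
classical `p`-th Wasserstein costs of the components. -/
theorem sot_cost_ge_avg_wasserstein
    {X : Type*} [MeasurableSpace X] [MetricSpace X] [PolishSpace X] [BorelSpace X]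
    {d : ℕ} (μ ν : Fin d → Measure X)
    (hμ : ∀ j, IsProbabilityMeasure (μ j)) (hν : ∀ j, IsProbabilityMeasure (ν j))
    (p : ℝ) (hp : 1 ≤ p) :
    (d : ℝ≥0∞)⁻¹ * ∑ j, wassersteinCostP (μ j) (ν j) p
      ≤ sInf {r : ℝ≥0∞ | ∃ π ∈ PiSet μ ν,
          r = ∫⁻ q, ENNReal.ofReal (dist q.1 q.2 ^ p) ∂π} := by
  classical
  haveI := hμ; haveI := hν
  refine le_sInf ?_
  rintro r ⟨π, ⟨κ, hκ, hdom, rfl⟩, rfl⟩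
  haveI := hκ
  set f : X × X → ℝ≥0∞ := fun q => ENNReal.ofReal (dist q.1 q.2 ^ p) with hf_def
  have hf : Measurable f :=
    by fun_prop
  -- each `(μ j) ⊗ₘ κ` is a coupling of `μ j` and `ν j`
  have hsnd : ∀ j, ((μ j).compProd κ).map Prod.snd = ν j := by
    intro j
    have happ : ∀ B : Set X, MeasurableSet B →
        ((μ j).compProd κ).map Prod.snd B = ∫⁻ x, κ x B ∂(μ j) := by
      intro B hB
      rw [Measure.map_apply measurable_snd hB,
        Measure.compProd_apply (measurable_snd hB)]
      rfl
    have hmass : ((μ j).compProd κ).map Prod.snd Set.univ = 1 := by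
      rw [happ _ MeasurableSet.univ]
      simp
    ext B hB
    have h1 : ν j B ≤ ((μ j).compProd κ).map Prod.snd B := by
      rw [happ _ hB]; exact hdom j B hB
    have h2 : ν j Bᶜ ≤ ((μ j).compProd κ).map Prod.snd Bᶜ := by
      rw [happ _ hB.compl]; exact hdom j Bᶜ hB.compl
    refine le_antisymm ?_ h1
    have hle1 : ((μ j).compProd κ).map Prod.snd B ≤ 1 := by
      rw [← hmass]; exact measure_mono (Set.subset_univ _)
    have hcm : ((μ j).compProd κ).map Prod.snd Bᶜ
        = 1 - ((μ j).compProd κ).map Prod.snd B := by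
      rw [measure_compl hB (hle1.trans_lt one_lt_top).ne, hmass]
    have hcν : (ν j) Bᶜ = 1 - ν j B := by
      rw [measure_compl hB (measure_ne_top _ _), measure_univ]
    rw [hcν, hcm] at h2
    exact (ENNReal.sub_le_sub_iff_left hle1 one_ne_top).mp h2
  have hW : ∀ j, wassersteinCostP (μ j) (ν j) p ≤ ∫⁻ q, f q ∂((μ j).compProd κ) := by
    intro j
    refine sInf_le ⟨(μ j).compProd κ, ?_, hsnd j, rfl⟩
    exact Measure.fst_compProd (μ j) κ
  -- decompose the integral against `avgProb μ ⊗ₘ κ`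
  haveI : SFinite (avgProb μ) := by unfold avgProb; infer_instance
  have hdecomp : ∫⁻ q, f q ∂((avgProb μ).compProd κ)
      = (d : ℝ≥0∞)⁻¹ * ∑ j, ∫⁻ q, f q ∂((μ j).compProd κ) := by
    rw [Measure.lintegral_compProd hf]
    unfold avgProb
    rw [lintegral_smul_measure, lintegral_finset_sum_measure]
    congr 1
    exact Finset.sum_congr rfl fun j _ => (Measure.lintegral_compProd hf).symm
  rw [hdecomp]
  exact mul_le_mul_right (Finset.sum_le_sum fun j _ => hW j) _

end
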